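/- Let G be a subgroup of Perm (Fin 5) acting transitively on Fin 5. If G contains an element of cycle type {3} (a 3-cycle), then G = Perm (Fin 5) or G is the alternating group A_5 on Fin 5. -/

import Mathlib

open Equiv

lemma cardPerm5 : Nat.card (Equiv.Perm (Fin 5)) = 120 := by
  rw [Nat.card_eq_fintype_card, Fintype.card_perm, Fintype.card_fin]; rfl

lemma cardA5 : Nat.card (alternatingGroup (Fin 5)) = 60 := by
  have h := two_mul_card_alternatingGroup (α := Fin 5)
  rw [Fintype.card_perm, Fintype.card_fin, show Nat.factorial 5 = 120 from rfl] at h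
  rw [Nat.card_eq_fintype_card]
  omega

/-- `A₅` has no subgroup of order 15 or 30. -/
lemma no_small_subgroup (H : Subgroup (Equiv.Perm (Fin 5)))
    (hle : H ≤ alternatingGroup (Fin 5))
    (hc : Nat.card H = 15 ∨ Nat.card H = 30) : False := by
  classical
  set K : Subgroup (alternatingGroup (Fin 5)) := H.subgroupOf (alternatingGroup (Fin 5)) with hK
  have hcardK : Nat.card K = Nat.card H :=
    Nat.card_congr (Subgroup.subgroupOfEquivOfLe hle).toEquiv
  have hmul : Nat.card K * K.index = 60 := by
    rw [Subgroup.card_mul_index, cardA5]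
  have hindex : K.index = 4 ∨ K.index = 2 := by
    rcases hc with h | h <;> rw [hcardK, h] at hmul <;> omega
  have hKne : K ≠ ⊤ := by
    intro h
    rw [h, Subgroup.index_top] at hindex
    omega
  have hcore : K.normalCore = ⊥ := by
    rcases (IsSimpleGroup.eq_bot_or_eq_top_of_normal K.normalCore inferInstance) with h | h
    · exact h
    · exact absurd (top_le_iff.mp (h ▸ Subgroup.normalCore_le K)) hKne
  have hinj : Function.Injective
      (MulAction.toPermHom (alternatingGroup (Fin 5)) (alternatingGroup (Fin 5) ⧸ K)) := by
    rw [← MonoidHom.ker_eq_bot_iff, ← Subgroup.normalCore_eq_ker, hcore]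
  have hle' := Nat.card_le_card_of_injective _ hinj
  have : Fintype (alternatingGroup (Fin 5) ⧸ K) := Fintype.ofFinite _
  have hqcard : Fintype.card (alternatingGroup (Fin 5) ⧸ K) = K.index := by
    rw [← Nat.card_eq_fintype_card, ← Subgroup.index_eq_card]
  have hpcard : Nat.card (Equiv.Perm (alternatingGroup (Fin 5) ⧸ K))
      = Nat.factorial K.index := by
    rw [Nat.card_eq_fintype_card, Fintype.card_perm, hqcard]
  rw [hpcard, cardA5] at hle'
  rcases hindex with h | h <;> rw [h] at hle' <;> norm_num [Nat.factorial] at hle'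

/-- A transitive subgroup of `Perm (Fin 5)` containing a 3-cycle is the full
symmetric group or the alternating group `A₅`. -/
theorem transitive_subgroup_of_mem_cycleType_3
    (G : Subgroup (Equiv.Perm (Fin 5)))
    (htrans : ∀ x y : Fin 5, ∃ g ∈ G, g x = y)
    (h3 : ∃ g ∈ G, Equiv.Perm.cycleType g = {3}) :
    G = ⊤ ∨ G = alternatingGroup (Fin 5) := by
  classical
  -- 3 divides the order of G
  obtain ⟨g, hgG, hgc⟩ := h3
  have horder : orderOf g = 3 := by
    rw [← Equiv.Perm.lcm_cycleType, hgc]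
    simp
  have h3dvd : 3 ∣ Nat.card G := by
    have h1 : orderOf (⟨g, hgG⟩ : G) = 3 := by rwa [← Subgroup.orderOf_coe]
    have h2 : orderOf (⟨g, hgG⟩ : G) ∣ Nat.card G := by
      rw [Nat.card_eq_fintype_card]; exact orderOf_dvd_card
    rwa [h1] at h2
  -- 5 divides the order of G, by transitivity and orbit-stabilizer
  have h5dvd : 5 ∣ Nat.card G := by
    have horb : MulAction.orbit G (0 : Fin 5) = Set.univ := by
      ext y
      simp only [Set.mem_univ, iff_true]
      obtain ⟨k, hkG, hk⟩ := htrans 0 y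
      exact ⟨⟨k, hkG⟩, hk⟩
    have hos := MulAction.card_orbit_mul_card_stabilizer_eq_card_group G (0 : Fin 5)
    have h5 : Nat.card (MulAction.orbit G (0 : Fin 5)) = 5 := by
      rw [horb, Nat.card_congr (Equiv.Set.univ _)]
      simp
    rw [← Nat.card_eq_fintype_card, ← Nat.card_eq_fintype_card, ← Nat.card_eq_fintype_card,
      h5] at hos
    exact Dvd.intro _ hos
  have h120 : Nat.card G ∣ 120 := cardPerm5 ▸ Subgroup.card_subgroup_dvd_card G
  have hpos : Nat.card G ≠ 0 := Nat.card_pos.ne'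
  -- hence the order of G is 15, 30, 60 or 120
  have hcases : Nat.card G = 15 ∨ Nat.card G = 30 ∨ Nat.card G = 60 ∨ Nat.card G = 120 := by
    have h15 : 15 ∣ Nat.card G := Nat.Coprime.mul_dvd_of_dvd_of_dvd (by norm_num) h3dvd h5dvd
    obtain ⟨k, hk⟩ := h15
    have hk8 : k ∣ 8 := by
      have : 15 * k ∣ 15 * 8 := by rw [← hk]; exact h120
      exact (mul_dvd_mul_iff_left (by norm_num : (15:ℕ) ≠ 0)).mp this
    have : k ≤ 8 := Nat.le_of_dvd (by norm_num) hk8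
    interval_cases k <;> omega
  -- compare G with A₅ via the relative index
  have hrdvd : (alternatingGroup (Fin 5)).relIndex G ∣ 2 := by
    have h2 : (alternatingGroup (Fin 5)).index = 2 := by
      have h := Subgroup.card_mul_index (alternatingGroup (Fin 5))
      rw [cardA5, cardPerm5] at h
      omega
    exact h2 ▸ Subgroup.relIndex_dvd_index_of_normal (alternatingGroup (Fin 5)) G
  have hmul : Nat.card (alternatingGroup (Fin 5) ⊓ G : Subgroup (Perm (Fin 5)))
      * (alternatingGroup (Fin 5)).relIndex G = Nat.card G := by
    have h1 : Nat.card ((alternatingGroup (Fin 5) ⊓ G).subgroupOf G)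
        = Nat.card (alternatingGroup (Fin 5) ⊓ G : Subgroup (Perm (Fin 5))) :=
      Nat.card_congr (Subgroup.subgroupOfEquivOfLe inf_le_right).toEquiv
    have h2 : ((alternatingGroup (Fin 5) ⊓ G).subgroupOf G).index
        = (alternatingGroup (Fin 5)).relIndex G := by
      rw [← Subgroup.inf_relIndex_right]
      rfl
    rw [← h1, ← h2, Subgroup.card_mul_index]
  have hrcases : (alternatingGroup (Fin 5)).relIndex G = 1
      ∨ (alternatingGroup (Fin 5)).relIndex G = 2 :=
    (Nat.dvd_prime Nat.prime_two).mp hrdvd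
  rcases hcases with hn | hn | hn | hn
  · -- order 15 : G ≤ A₅ and contradiction
    exfalso
    rcases hrcases with hr | hr
    · exact no_small_subgroup G (Subgroup.relIndex_eq_one.mp hr) (Or.inl hn)
    · rw [hr, hn] at hmul; omega
  · -- order 30 : contradiction
    exfalso
    rcases hrcases with hr | hr
    · exact no_small_subgroup G (Subgroup.relIndex_eq_one.mp hr) (Or.inr hn)
    · refine no_small_subgroup (alternatingGroup (Fin 5) ⊓ G) inf_le_left (Or.inl ?_)
      rw [hr, hn] at hmul; omega
  · -- order 60 : G = A₅
    rcases hrcases with hr | hr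
    · refine Or.inr (Subgroup.eq_of_le_of_card_ge (Subgroup.relIndex_eq_one.mp hr) ?_)
      rw [cardA5, hn]
    · exfalso
      refine no_small_subgroup (alternatingGroup (Fin 5) ⊓ G) inf_le_left (Or.inr ?_)
      rw [hr, hn] at hmul; omega
  · -- order 120 : G = ⊤
    exact Or.inl (Subgroup.eq_top_of_card_eq G (by rw [hn, cardPerm5]))
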